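/- Let λ = (λ_1,…,λ_a), μ = (μ_1,…,μ_b), ν = (ν_1,…,ν_c) be indices with a, b ≥ 1. Then the 'p divides L_a+M_b' part of li(λ,μ,ν;T) equals (−1)^{wt(μ)} (Σ_{i=1}^{a+b−1} ζ^{(i)}_𝒜(λ⋆μ)·(T^p)^i) · li_ν(T); that is, the element of ℬ whose p-component is the sum of T^{L_a+M_b+N_c} / (∏_{x=1}^a L_x^{λ_x} · ∏_{y=1}^b M_y^{μ_y} · ∏_{z=1}^c (L_a+M_b+N_z)^{ν_z}) over all 0 < l_i, m_j, n_k < p with p | L_a+M_b (restricted to terms with denominators prime to p) equals (−1)^{wt(μ)} Σ_{i=1}^{a+b−1} ζ^{(i)}_𝒜(λ⋆μ)·(T^p)^i·li_ν(T). -/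

import Mathlib

open scoped BigOperators

set_option synthInstance.maxHeartbeats 400000

namespace FMP

/-- The type of prime numbers. -/
abbrev PP := Nat.Primes

instance (p : PP) : Fact (Nat.Prime (p : ℕ)) := ⟨p.2⟩

/-- The ideal of families vanishing at all but finitely many primes. -/
def cofinIdeal (R : PP → Type) [∀ p, CommRing (R p)] : Ideal (∀ p, R p) where
  carrier := {f | ∀ᶠ p in Filter.cofinite, f p = 0}
  add_mem' := by
    intro f g hf hg
    show ∀ᶠ p in Filter.cofinite, (f + g) p = 0
    simp only [Set.mem_setOf_eq] at hf hg
    filter_upwards [hf, hg] with p h1 h2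
    simp [h1, h2]
  zero_mem' := by
    show ∀ᶠ p in Filter.cofinite, (0 : ∀ p, R p) p = 0
    exact Filter.Eventually.of_forall fun p => rfl
  smul_mem' := by
    intro c f hf
    show ∀ᶠ p in Filter.cofinite, (c • f) p = 0
    simp only [Set.mem_setOf_eq] at hf
    filter_upwards [hf] with p h
    simp [h]

lemma mem_cofinIdeal {R : PP → Type} [∀ p, CommRing (R p)] (f : ∀ p, R p) :
    f ∈ cofinIdeal R ↔ ∀ᶠ p in Filter.cofinite, f p = 0 := Iff.rfl

/-- The ring 𝒜 = (∏ₚ 𝔽ₚ)/(⊕ₚ 𝔽ₚ). -/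
abbrev A : Type := (∀ p : PP, ZMod p) ⧸ cofinIdeal fun p => ZMod p

/-- The ring ℬ = (∏ₚ 𝔽ₚ[T])/(⊕ₚ 𝔽ₚ[T]). -/
abbrev B : Type := (∀ p : PP, Polynomial (ZMod p)) ⧸ cofinIdeal fun p => Polynomial (ZMod p)

noncomputable def Amk : (∀ p : PP, ZMod p) →+* A := Ideal.Quotient.mk _
noncomputable def Bmk : (∀ p : PP, Polynomial (ZMod p)) →+* B := Ideal.Quotient.mk _

/-- The componentwise action of 𝒜 on ℬ, as a ring homomorphism 𝒜 →+* ℬ. -/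
noncomputable def AtoB : A →+* B :=
  Ideal.Quotient.lift _
    (Bmk.comp (Pi.ringHom fun p => Polynomial.C.comp (Pi.evalRingHom (fun q : PP => ZMod (q : ℕ)) p)))
    (fun f hf => by
      rw [RingHom.comp_apply]
      rw [show Bmk = Ideal.Quotient.mk (cofinIdeal fun p => Polynomial (ZMod p)) from rfl]
      rw [Ideal.Quotient.eq_zero_iff_mem, mem_cofinIdeal]
      rw [mem_cofinIdeal] at hf
      filter_upwards [hf] with p h
      change Polynomial.C (f p) = 0
      rw [h]
      exact map_zero _)

/-- Partial sums: `psum l i = l 0 + ... + l i`. -/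
def psum {r : ℕ} (l : Fin r → ℕ) (i : Fin r) : ℕ := ∑ j ∈ Finset.Iic i, l j

/-- The finset of tuples `(l 0, ..., l (r-1))` with `0 < l i < p`. -/
def pf (r p : ℕ) : Finset (Fin r → ℕ) := Fintype.piFinset fun _ => Finset.Ioo 0 p

/-- The denominator `L_1^{k_1} ⋯ L_r^{k_r}` of a term, as an element of 𝔽ₚ.
(Its inverse is `0` whenever some partial sum is divisible by `p`, so taking inverses
of these denominators automatically implements the restricted sums `Σ'`.) -/
def den (p : PP) (k : List ℕ) (l : Fin k.length → ℕ) : ZMod (p : ℕ) :=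
  ∏ i, ((psum l i : ℕ) : ZMod (p : ℕ)) ^ k.get i

/-- The weight of an index. -/
def wt (k : List ℕ) : ℕ := k.sum

/-- The finite multiple zeta value ζ_𝒜(k). -/
noncomputable def zetaA (k : List ℕ) : A :=
  Amk fun p => ∑ l ∈ (pf k.length (p : ℕ)).filter (fun l => ∑ i, l i < (p : ℕ)), (den p k l)⁻¹

/-- The variant ζ^{(i)}_𝒜(k) of finite multiple zeta values. -/
noncomputable def zetaAi (i : ℕ) (k : List ℕ) : A :=
  Amk fun p => ∑ l ∈ (pf k.length (p : ℕ)).filter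
      (fun l => (i - 1) * (p : ℕ) < ∑ j, l j ∧ ∑ j, l j < i * (p : ℕ)), (den p k l)⁻¹

/-- The finite multiple polylogarithm li_k(T) ∈ ℬ. -/
noncomputable def liT (k : List ℕ) : B :=
  Bmk fun p => ∑ l ∈ pf k.length (p : ℕ),
    Polynomial.C ((den p k l)⁻¹) * Polynomial.X ^ (∑ i, l i)

/-- The element T^p of ℬ. -/
noncomputable def Tp : B := Bmk fun p => Polynomial.X ^ (p : ℕ)

/-- The finite multiple polylogarithm li(λ, μ, ν; T) of type (λ, μ, ν). -/
noncomputable def liType (lam mu nu : List ℕ) : B :=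
  Bmk fun p =>
    ∑ l ∈ pf lam.length (p : ℕ), ∑ m ∈ pf mu.length (p : ℕ), ∑ n ∈ pf nu.length (p : ℕ),
      Polynomial.C ((den p lam l * den p mu m *
          ∏ z, ((((∑ i, l i) + (∑ j, m j) + psum n z : ℕ)) : ZMod (p : ℕ)) ^ nu.get z)⁻¹) *
        Polynomial.X ^ ((∑ i, l i) + (∑ j, m j) + (∑ z, n z))


def extF {r : ℕ} (l : Fin r → ℕ) (j : ℕ) : ℕ := if h : j < r then l ⟨j, h⟩ else 0
lemma extF_lt {r : ℕ} (l : Fin r → ℕ) {j : ℕ} (h : j < r) : extF l j = l ⟨j, h⟩ := dif_pos h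

lemma psum_eq {r : ℕ} (l : Fin r → ℕ) (i : Fin r) :
    psum l i = ∑ j ∈ Finset.range (i.val + 1), extF l j := by
  unfold psum
  refine Finset.sum_bij' (fun j _ => (j : ℕ)) (fun j hj => ⟨j, by
      simp only [Finset.mem_range] at hj; omega⟩) ?_ ?_ ?_ ?_ ?_
  · intro a ha
    simp only [Finset.mem_Iic] at ha
    simp only [Finset.mem_range]
    exact Nat.lt_succ_of_le ha
  · intro a ha
    simp only [Finset.mem_range] at ha
    simp only [Finset.mem_Iic, Fin.le_def]
    omega
  · intro a _; rfl
  · intro a _; rfl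
  · intro a ha; exact (extF_lt l a.2).symm

lemma sum_univ_extF {r : ℕ} (l : Fin r → ℕ) : ∑ j, l j = ∑ j ∈ Finset.range r, extF l j := by
  rw [← Fin.sum_univ_eq_sum_range (extF l) r]
  exact Finset.sum_congr rfl fun i _ => (extF_lt l i.2).symm
lemma mem_pf {r p : ℕ} {l : Fin r → ℕ} : l ∈ pf r p ↔ ∀ j, 0 < l j ∧ l j < p := by
  simp [pf, Fintype.mem_piFinset, Finset.mem_Ioo]
lemma den_eq (p : PP) (k : List ℕ) (l : Fin k.length → ℕ) :
    den p k l = ∏ x ∈ Finset.range k.length,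
      (((∑ j ∈ Finset.range (x + 1), extF l j : ℕ)) : ZMod (p : ℕ)) ^ k.getD x 0 := by
  unfold den
  rw [← Fin.prod_univ_eq_prod_range
    (fun x => (((∑ j ∈ Finset.range (x + 1), extF l j : ℕ)) : ZMod (p : ℕ)) ^ k.getD x 0)]
  refine Finset.prod_congr rfl fun i _ => ?_
  rw [psum_eq, List.getD_eq_getElem _ _ i.2, List.get_eq_getElem]
lemma sum_range_rev {M : Type*} [AddCommMonoid M] (f : ℕ → M) (n : ℕ) :
    ∑ t ∈ Finset.range n, f (n - t) = ∑ t ∈ Finset.range n, f (t + 1) := by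
  rw [← Finset.sum_range_reflect (fun t => f (t + 1)) n]
  refine Finset.sum_congr rfl fun t ht => ?_
  rw [Finset.mem_range] at ht
  congr 1
  omega

lemma key_den_abs (p : PP) (i : ℕ) (a0 b0 : ℕ) (lam mu kk : List ℕ)
    (hA : lam.length = a0 + 1) (hB : mu.length = b0 + 1) (hR : kk.length = a0 + 1 + b0)
    (hg1 : ∀ x, x < a0 → kk.getD x 0 = lam.getD x 0)
    (hg2 : kk.getD a0 0 = lam.getD a0 0 + mu.getD b0 0)
    (hg3 : ∀ t, t < b0 → kk.getD (a0 + 1 + t) 0 = mu.getD (b0 - 1 - t) 0)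
    (hw : mu.sum = ∑ y ∈ Finset.range (b0 + 1), mu.getD y 0)
    (l : Fin lam.length → ℕ) (m : Fin mu.length → ℕ)
    (hS : (∑ x, l x) + (∑ y, m y) = i * (p : ℕ)) :
    den p kk (fun j => if (j : ℕ) < lam.length then extF l (j : ℕ)
      else extF m (mu.length - 1 - ((j : ℕ) - lam.length)))
    = (-1 : ZMod (p : ℕ)) ^ mu.sum * (den p lam l * den p mu m) := by
  have hp0 : ((i * (p : ℕ) : ℕ) : ZMod (p : ℕ)) = 0 := by
    rw [Nat.cast_mul, ZMod.natCast_self, mul_zero]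
  have hLtot : (∑ x, l x) = ∑ j ∈ Finset.range lam.length, extF l j := sum_univ_extF l
  have hMtot : (∑ y, m y) = ∑ j ∈ Finset.range mu.length, extF m j := sum_univ_extF m
  have hMb0 : (∑ j ∈ Finset.range mu.length, extF m j)
      = ∑ j ∈ Finset.range (b0 + 1), extF m j := by
    rw [show Finset.range mu.length = Finset.range (b0 + 1) by rw [hB]]
  have hLa0 : (∑ j ∈ Finset.range lam.length, extF l j)
      = ∑ j ∈ Finset.range (a0 + 1), extF l j := by
    rw [show Finset.range lam.length = Finset.range (a0 + 1) by rw [hA]]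
  have hFl : ∀ x, x + 1 ≤ lam.length → (∑ j ∈ Finset.range (x + 1), (if j < lam.length then extF l j else extF m (mu.length - 1 - (j - lam.length))))
      = ∑ j ∈ Finset.range (x + 1), extF l j :=
    fun x hx => Finset.sum_congr rfl fun j hj =>
      if_pos (by have := Finset.mem_range.mp hj; omega)
  have htail : ∀ t, t < b0 → (∑ j ∈ Finset.range (lam.length + t + 1), (if j < lam.length then extF l j else extF m (mu.length - 1 - (j - lam.length))))
      + (∑ j ∈ Finset.range (b0 - 1 - t + 1), extF m j) = i * (p : ℕ) := by
    intro t ht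
    have e1 : (∑ j ∈ Finset.range (lam.length + t + 1), (if j < lam.length then extF l j else extF m (mu.length - 1 - (j - lam.length))))
        = (∑ j ∈ Finset.range lam.length, extF l j)
          + ∑ u ∈ Finset.range (t + 1), extF m (b0 - u) := by
      rw [show lam.length + t + 1 = lam.length + (t + 1) by omega, Finset.sum_range_add]
      congr 1
      · exact Finset.sum_congr rfl fun j hj => if_pos (Finset.mem_range.mp hj)
      · refine Finset.sum_congr rfl fun u hu => ?_
        have hu' := Finset.mem_range.mp hu
        rw [if_neg (by omega)]
        congr 1
        omega
    have e2 : (∑ j ∈ Finset.range (b0 - 1 - t + 1), extF m j)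
        + (∑ u ∈ Finset.range (t + 1), extF m (b0 - u))
        = ∑ j ∈ Finset.range (b0 + 1), extF m j := by
      rw [show b0 + 1 = (b0 - 1 - t + 1) + (t + 1) by omega,
        Finset.sum_range_add (extF m) (b0 - 1 - t + 1) (t + 1)]
      congr 1
      rw [← Finset.sum_range_reflect (fun u => extF m (b0 - 1 - t + 1 + u)) (t + 1)]
      refine Finset.sum_congr rfl fun u hu => ?_
      have hu' := Finset.mem_range.mp hu
      congr 1
      omega
    omega
  have hcast_tail : ∀ t, t < b0 →
      ((∑ j ∈ Finset.range (lam.length + t + 1), (if j < lam.length then extF l j else extF m (mu.length - 1 - (j - lam.length))) : ℕ) : ZMod (p : ℕ))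
      = - ((∑ j ∈ Finset.range (b0 - 1 - t + 1), extF m j : ℕ) : ZMod (p : ℕ)) := by
    intro t ht
    refine eq_neg_of_add_eq_zero_left ?_
    rw [← Nat.cast_add, htail t ht, hp0]
  have hmid_nat : (∑ j ∈ Finset.range (a0 + 1), (if j < lam.length then extF l j else extF m (mu.length - 1 - (j - lam.length))))
      + (∑ j ∈ Finset.range (b0 + 1), extF m j) = i * (p : ℕ) := by
    rw [hFl a0 (by omega)]
    omega
  have hcast_mid : ((∑ j ∈ Finset.range (a0 + 1), (if j < lam.length then extF l j else extF m (mu.length - 1 - (j - lam.length))) : ℕ) : ZMod (p : ℕ))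
      = - ((∑ j ∈ Finset.range (b0 + 1), extF m j : ℕ) : ZMod (p : ℕ)) := by
    refine eq_neg_of_add_eq_zero_left ?_
    rw [← Nat.cast_add, hmid_nat, hp0]
  calc den p kk (fun j => if (j : ℕ) < lam.length then extF l (j : ℕ)
        else extF m (mu.length - 1 - ((j : ℕ) - lam.length)))
      = ∏ x ∈ Finset.range kk.length, (((∑ j ∈ Finset.range (x + 1), (if j < lam.length then extF l j else extF m (mu.length - 1 - (j - lam.length))) : ℕ) : ZMod (p : ℕ))) ^ kk.getD x 0 := by
        rw [den_eq]
        refine Finset.prod_congr rfl fun x hx => ?_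
        have hx' := Finset.mem_range.mp hx
        exact congrArg (fun z : ℕ => ((z : ZMod (p : ℕ))) ^ kk.getD x 0)
          (Finset.sum_congr rfl fun j hj =>
            extF_lt _ (by have := Finset.mem_range.mp hj; omega))
    _ = ∏ x ∈ Finset.range (lam.length + b0), (((∑ j ∈ Finset.range (x + 1), (if j < lam.length then extF l j else extF m (mu.length - 1 - (j - lam.length))) : ℕ) : ZMod (p : ℕ))) ^ kk.getD x 0 := by
        rw [show Finset.range kk.length = Finset.range (lam.length + b0) by rw [hR, hA]]
    _ = (∏ x ∈ Finset.range lam.length, (((∑ j ∈ Finset.range (x + 1), (if j < lam.length then extF l j else extF m (mu.length - 1 - (j - lam.length))) : ℕ) : ZMod (p : ℕ))) ^ kk.getD x 0)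
        * ∏ t ∈ Finset.range b0, (((∑ j ∈ Finset.range (lam.length + t + 1), (if j < lam.length then extF l j else extF m (mu.length - 1 - (j - lam.length))) : ℕ) : ZMod (p : ℕ))) ^ kk.getD (lam.length + t) 0 :=
        Finset.prod_range_add _ lam.length b0
    _ = (den p lam l * (-(((∑ j ∈ Finset.range (b0 + 1), extF m j : ℕ) : ZMod (p : ℕ)))) ^ mu.getD b0 0)
        * ((-1 : ZMod (p : ℕ)) ^ (∑ y ∈ Finset.range b0, mu.getD y 0) * (∏ y ∈ Finset.range b0, (((∑ j ∈ Finset.range (y + 1), extF m j : ℕ) : ZMod (p : ℕ))) ^ mu.getD y 0)) := by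
        congr 1
        · calc ∏ x ∈ Finset.range lam.length, (((∑ j ∈ Finset.range (x + 1), (if j < lam.length then extF l j else extF m (mu.length - 1 - (j - lam.length))) : ℕ) : ZMod (p : ℕ))) ^ kk.getD x 0
              = ∏ x ∈ Finset.range (a0 + 1), (((∑ j ∈ Finset.range (x + 1), (if j < lam.length then extF l j else extF m (mu.length - 1 - (j - lam.length))) : ℕ) : ZMod (p : ℕ))) ^ kk.getD x 0 := by
                rw [show Finset.range lam.length = Finset.range (a0 + 1) by rw [hA]]
            _ = (∏ x ∈ Finset.range a0, (((∑ j ∈ Finset.range (x + 1), (if j < lam.length then extF l j else extF m (mu.length - 1 - (j - lam.length))) : ℕ) : ZMod (p : ℕ))) ^ kk.getD x 0)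
                * (((∑ j ∈ Finset.range (a0 + 1), (if j < lam.length then extF l j else extF m (mu.length - 1 - (j - lam.length))) : ℕ) : ZMod (p : ℕ))) ^ kk.getD a0 0 := Finset.prod_range_succ _ a0
            _ = (∏ x ∈ Finset.range a0,
                  (((∑ j ∈ Finset.range (x + 1), extF l j : ℕ)) : ZMod (p : ℕ)) ^ lam.getD x 0)
                * ((((∑ j ∈ Finset.range (a0 + 1), extF l j : ℕ)) : ZMod (p : ℕ)) ^ lam.getD a0 0
                  * (-(((∑ j ∈ Finset.range (b0 + 1), extF m j : ℕ) : ZMod (p : ℕ)))) ^ mu.getD b0 0) := by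
                congr 1
                · refine Finset.prod_congr rfl fun x hx => ?_
                  have hx' := Finset.mem_range.mp hx
                  rw [hg1 x hx', hFl x (by omega)]
                · rw [hg2, pow_add]
                  congr 1
                  · exact congrArg (fun z : ℕ => ((z : ZMod (p : ℕ))) ^ lam.getD a0 0)
                      (hFl a0 (by omega))
                  · exact congrArg (fun z => z ^ mu.getD b0 0) hcast_mid
            _ = (∏ x ∈ Finset.range (a0 + 1),
                  (((∑ j ∈ Finset.range (x + 1), extF l j : ℕ)) : ZMod (p : ℕ)) ^ lam.getD x 0)
                * (-(((∑ j ∈ Finset.range (b0 + 1), extF m j : ℕ) : ZMod (p : ℕ)))) ^ mu.getD b0 0 := by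
                rw [Finset.prod_range_succ]
                ring
            _ = den p lam l * (-(((∑ j ∈ Finset.range (b0 + 1), extF m j : ℕ) : ZMod (p : ℕ)))) ^ mu.getD b0 0 := by
                rw [den_eq, show Finset.range lam.length = Finset.range (a0 + 1) by rw [hA]]
        · calc ∏ t ∈ Finset.range b0, (((∑ j ∈ Finset.range (lam.length + t + 1), (if j < lam.length then extF l j else extF m (mu.length - 1 - (j - lam.length))) : ℕ) : ZMod (p : ℕ))) ^ kk.getD (lam.length + t) 0
              = ∏ t ∈ Finset.range b0,
                  (-(((∑ j ∈ Finset.range (b0 - 1 - t + 1), extF m j : ℕ) : ZMod (p : ℕ)))) ^ mu.getD (b0 - 1 - t) 0 := by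
                refine Finset.prod_congr rfl fun t ht => ?_
                have ht' := Finset.mem_range.mp ht
                rw [show kk.getD (lam.length + t) 0 = mu.getD (b0 - 1 - t) 0 by
                  rw [show lam.length + t = a0 + 1 + t by omega]
                  exact hg3 t ht']
                exact congrArg (fun z => z ^ mu.getD (b0 - 1 - t) 0) (hcast_tail t ht')
            _ = ∏ y ∈ Finset.range b0, (-(((∑ j ∈ Finset.range (y + 1), extF m j : ℕ) : ZMod (p : ℕ)))) ^ mu.getD y 0 :=
                Finset.prod_range_reflect (fun y => (-(((∑ j ∈ Finset.range (y + 1), extF m j : ℕ) : ZMod (p : ℕ)))) ^ mu.getD y 0) b0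
            _ = (-1 : ZMod (p : ℕ)) ^ (∑ y ∈ Finset.range b0, mu.getD y 0) * (∏ y ∈ Finset.range b0, (((∑ j ∈ Finset.range (y + 1), extF m j : ℕ) : ZMod (p : ℕ))) ^ mu.getD y 0) := by
                rw [Finset.prod_congr rfl (fun y _ => neg_pow (((∑ j ∈ Finset.range (y + 1), extF m j : ℕ) : ZMod (p : ℕ))) (mu.getD y 0)),
                  Finset.prod_mul_distrib, Finset.prod_pow_eq_pow_sum]
    _ = (-1 : ZMod (p : ℕ)) ^ mu.sum * (den p lam l * den p mu m) := by
        have hden_mu : den p mu m = (∏ y ∈ Finset.range b0, (((∑ j ∈ Finset.range (y + 1), extF m j : ℕ) : ZMod (p : ℕ))) ^ mu.getD y 0) * (((∑ j ∈ Finset.range (b0 + 1), extF m j : ℕ) : ZMod (p : ℕ))) ^ mu.getD b0 0 := by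
          rw [den_eq, show Finset.range mu.length = Finset.range (b0 + 1) by rw [hB],
            Finset.prod_range_succ]
        have hsum : mu.sum = (∑ y ∈ Finset.range b0, mu.getD y 0) + mu.getD b0 0 := by
          rw [hw, Finset.sum_range_succ]
        rw [hden_mu, hsum, neg_pow]
        ring

lemma list_sum_eq (k : List ℕ) : k.sum = ∑ x ∈ Finset.range k.length, k.getD x 0 := by
  induction k with
  | nil => simp
  | cons a k ih =>
    rw [List.sum_cons, ih, List.length_cons, Finset.sum_range_succ']
    simp [List.getD]
    ring

lemma core_abs (p : PP) (i : ℕ) (hi : 1 ≤ i) (a0 b0 : ℕ) (lam mu kk : List ℕ)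
    (hA : lam.length = a0 + 1) (hB : mu.length = b0 + 1) (hR : kk.length = a0 + 1 + b0)
    (hg1 : ∀ x, x < a0 → kk.getD x 0 = lam.getD x 0)
    (hg2 : kk.getD a0 0 = lam.getD a0 0 + mu.getD b0 0)
    (hg3 : ∀ t, t < b0 → kk.getD (a0 + 1 + t) 0 = mu.getD (b0 - 1 - t) 0)
    (hw : mu.sum = ∑ y ∈ Finset.range (b0 + 1), mu.getD y 0) :
    (∑ l ∈ pf lam.length (p : ℕ), ∑ m ∈ pf mu.length (p : ℕ),
      if (∑ x, l x) + (∑ y, m y) = i * (p : ℕ)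
      then (den p lam l * den p mu m)⁻¹ else 0)
    = (-1 : ZMod (p : ℕ)) ^ mu.sum *
      ∑ l' ∈ (pf kk.length (p : ℕ)).filter
          (fun l' => (i - 1) * (p : ℕ) < ∑ j, l' j ∧ ∑ j, l' j < i * (p : ℕ)),
        (den p kk l')⁻¹ := by
  have hp : 0 < (p : ℕ) := p.2.pos
  have hip1 : (i - 1) * (p : ℕ) + (p : ℕ) = i * (p : ℕ) := by
    cases i with
    | zero => omega
    | succ n => simp [Nat.succ_sub_one, add_mul]
  -- sum of phi
  have key_sum : ∀ (l : Fin lam.length → ℕ) (m : Fin mu.length → ℕ),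
      (∑ j : Fin kk.length, (if (j : ℕ) < lam.length then extF l (j : ℕ)
        else extF m (mu.length - 1 - ((j : ℕ) - lam.length))))
        + extF m 0 = (∑ x, l x) + (∑ y, m y) := by
    intro l m
    have e1 : (∑ j : Fin kk.length, (if (j : ℕ) < lam.length then extF l (j : ℕ)
        else extF m (mu.length - 1 - ((j : ℕ) - lam.length))))
        = (∑ x, l x) + ∑ t ∈ Finset.range b0, extF m (t + 1) := by
      calc (∑ j : Fin kk.length, (if (j : ℕ) < lam.length then extF l (j : ℕ)
            else extF m (mu.length - 1 - ((j : ℕ) - lam.length))))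
          = ∑ j ∈ Finset.range kk.length, (if j < lam.length then extF l j
              else extF m (mu.length - 1 - (j - lam.length))) := by
            rw [sum_univ_extF]
            exact Finset.sum_congr rfl fun j hj => extF_lt _ (Finset.mem_range.mp hj)
        _ = ∑ j ∈ Finset.range (lam.length + b0), (if j < lam.length then extF l j
              else extF m (mu.length - 1 - (j - lam.length))) := by
            rw [show Finset.range kk.length = Finset.range (lam.length + b0) by rw [hR, hA]]
        _ = (∑ j ∈ Finset.range lam.length, (if j < lam.length then extF l j
              else extF m (mu.length - 1 - (j - lam.length))))
            + ∑ t ∈ Finset.range b0, (if lam.length + t < lam.length then extF l (lam.length + t)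
              else extF m (mu.length - 1 - (lam.length + t - lam.length))) :=
            Finset.sum_range_add _ lam.length b0
        _ = (∑ x, l x) + ∑ t ∈ Finset.range b0, extF m (t + 1) := by
            congr 1
            · rw [Finset.sum_congr rfl (fun j hj => if_pos (Finset.mem_range.mp hj)),
                ← sum_univ_extF]
            · rw [← sum_range_rev (extF m) b0]
              refine Finset.sum_congr rfl fun t ht => ?_
              have ht' := Finset.mem_range.mp ht
              rw [if_neg (by omega)]
              congr 1
              omega
    have e2 : extF m 0 + ∑ t ∈ Finset.range b0, extF m (t + 1) = ∑ y, m y := by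
      rw [sum_univ_extF m, show Finset.range mu.length = Finset.range (b0 + 1) by rw [hB],
        Finset.sum_range_succ']
      omega
    omega
  have psi_sum : ∀ l' : Fin kk.length → ℕ, (∑ j, l' j) ≤ i * (p : ℕ) →
      (∑ x : Fin lam.length, extF l' (x : ℕ))
        + (∑ y : Fin mu.length, (if (y : ℕ) = 0 then i * (p : ℕ) - ∑ j, l' j
            else extF l' (lam.length + (mu.length - 1 - (y : ℕ))))) = i * (p : ℕ) := by
    intro l' hle
    have e1 : (∑ x : Fin lam.length, extF l' (x : ℕ))
        = ∑ j ∈ Finset.range lam.length, extF l' j := by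
      rw [sum_univ_extF]
      exact Finset.sum_congr rfl fun j hj => extF_lt _ (Finset.mem_range.mp hj)
    have e2 : (∑ y : Fin mu.length, (if (y : ℕ) = 0 then i * (p : ℕ) - ∑ j, l' j
          else extF l' (lam.length + (mu.length - 1 - (y : ℕ)))))
        = (∑ t ∈ Finset.range b0, extF l' (lam.length + t)) + (i * (p : ℕ) - ∑ j, l' j) := by
      calc (∑ y : Fin mu.length, (if (y : ℕ) = 0 then i * (p : ℕ) - ∑ j, l' j
            else extF l' (lam.length + (mu.length - 1 - (y : ℕ)))))
          = ∑ y ∈ Finset.range (b0 + 1), (if y = 0 then i * (p : ℕ) - ∑ j, l' j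
              else extF l' (lam.length + (mu.length - 1 - y))) := by
            rw [sum_univ_extF,
              show Finset.range mu.length = Finset.range (b0 + 1) by rw [hB]]
            exact Finset.sum_congr rfl fun j hj => extF_lt _
              (by have := Finset.mem_range.mp hj; omega)
        _ = (∑ t ∈ Finset.range b0, (if t + 1 = 0 then i * (p : ℕ) - ∑ j, l' j
              else extF l' (lam.length + (mu.length - 1 - (t + 1)))))
            + (if (0 : ℕ) = 0 then i * (p : ℕ) - ∑ j, l' j
              else extF l' (lam.length + (mu.length - 1 - 0))) := Finset.sum_range_succ' _ b0
        _ = (∑ t ∈ Finset.range b0, extF l' (lam.length + t)) + (i * (p : ℕ) - ∑ j, l' j) := by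
            rw [if_pos rfl]
            congr 1
            rw [← Finset.sum_range_reflect (fun t => extF l' (lam.length + t)) b0]
            refine Finset.sum_congr rfl fun t ht => ?_
            have ht' := Finset.mem_range.mp ht
            rw [if_neg (Nat.succ_ne_zero t)]
            congr 1
            omega
    have e3 : (∑ j ∈ Finset.range lam.length, extF l' j)
        + (∑ t ∈ Finset.range b0, extF l' (lam.length + t)) = ∑ j, l' j := by
      rw [sum_univ_extF l',
        show Finset.range kk.length = Finset.range (lam.length + b0) by rw [hR, hA],
        Finset.sum_range_add]
    omega
  have key_den : ∀ (l : Fin lam.length → ℕ) (m : Fin mu.length → ℕ),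
      (∑ x, l x) + (∑ y, m y) = i * (p : ℕ) →
      den p kk (fun j => if (j : ℕ) < lam.length then extF l (j : ℕ)
        else extF m (mu.length - 1 - ((j : ℕ) - lam.length)))
      = (-1 : ZMod (p : ℕ)) ^ mu.sum * (den p lam l * den p mu m) :=
    fun l m hS => key_den_abs p i a0 b0 lam mu kk hA hB hR hg1 hg2 hg3 hw l m hS
  rw [Finset.mul_sum, ← Finset.sum_product', ← Finset.sum_filter]
  refine Finset.sum_nbij'
    (i := fun x (j : Fin kk.length) =>
      if (j : ℕ) < lam.length then extF x.1 (j : ℕ)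
      else extF x.2 (mu.length - 1 - ((j : ℕ) - lam.length)))
    (j := fun l' =>
      ((fun x => extF l' (x : ℕ)),
       (fun y => if (y : ℕ) = 0 then i * (p : ℕ) - ∑ j, l' j
         else extF l' (lam.length + (mu.length - 1 - (y : ℕ))))))
    ?_ ?_ ?_ ?_ ?_
  · rintro ⟨l, m⟩ hx
    rw [Finset.mem_filter, Finset.mem_product] at hx
    obtain ⟨⟨hl, hm⟩, hS⟩ := hx
    rw [mem_pf] at hl hm
    rw [Finset.mem_filter]
    dsimp only at hS ⊢
    have hks := key_sum l m
    refine ⟨?_, ?_, ?_⟩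
    · rw [mem_pf]
      intro j
      by_cases h : (j : ℕ) < lam.length
      · rw [if_pos h, extF_lt l h]; exact hl _
      · rw [if_neg h,
          extF_lt m (show mu.length - 1 - ((j : ℕ) - lam.length) < mu.length by omega)]
        exact hm _
    · have h0 : 0 < extF m 0 ∧ extF m 0 < (p : ℕ) := by
        rw [extF_lt m (show (0 : ℕ) < mu.length by omega)]
        exact hm _
      omega
    · have h0 : 0 < extF m 0 ∧ extF m 0 < (p : ℕ) := by
        rw [extF_lt m (show (0 : ℕ) < mu.length by omega)]
        exact hm _
      omega
  · intro l' hl'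
    rw [Finset.mem_filter] at hl'
    obtain ⟨hl'm, hlt, hlt2⟩ := hl'
    rw [mem_pf] at hl'm
    rw [Finset.mem_filter, Finset.mem_product]
    refine ⟨⟨?_, ?_⟩, ?_⟩
    · rw [mem_pf]; intro x
      dsimp only
      rw [extF_lt l' (show (x : ℕ) < kk.length by have := x.isLt; omega)]
      exact hl'm _
    · rw [mem_pf]; intro y
      dsimp only
      by_cases h : (y : ℕ) = 0
      · rw [if_pos h]; omega
      · rw [if_neg h, extF_lt l' (show lam.length + (mu.length - 1 - (y : ℕ)) < kk.length by
          have := y.isLt; omega)]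
        exact hl'm _
    · dsimp only
      exact psi_sum l' (by omega)
  · rintro ⟨l, m⟩ hx
    rw [Finset.mem_filter, Finset.mem_product] at hx
    obtain ⟨⟨hl, hm⟩, hS⟩ := hx
    rw [mem_pf] at hm
    dsimp only at hS
    have hks := key_sum l m
    refine Prod.ext ?_ ?_
    · funext x
      dsimp only
      rw [extF_lt _ (show (x : ℕ) < kk.length by have := x.isLt; omega)]
      rw [if_pos x.isLt, extF_lt l x.isLt]
    · funext y
      dsimp only
      by_cases h : (y : ℕ) = 0
      · rw [if_pos h]
        have h0 : extF m 0 = m y := by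
          rw [extF_lt m (show (0 : ℕ) < mu.length by omega)]
          congr 1
          exact Fin.ext h.symm
        omega
      · rw [if_neg h]
        rw [extF_lt _ (show lam.length + (mu.length - 1 - (y : ℕ)) < kk.length by
          have := y.isLt; omega)]
        rw [if_neg (show ¬(lam.length + (mu.length - 1 - (y : ℕ)) < lam.length) by omega)]
        have hc : mu.length - 1 - (lam.length + (mu.length - 1 - (y : ℕ)) - lam.length)
            = (y : ℕ) := by have := y.isLt; omega
        rw [hc, extF_lt m y.isLt]
  · intro l' hl'
    rw [Finset.mem_filter] at hl'
    obtain ⟨hl'm, hlt, hlt2⟩ := hl'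
    funext j
    dsimp only
    by_cases h : (j : ℕ) < lam.length
    · rw [if_pos h, extF_lt _ h, extF_lt l' j.isLt]
    · rw [if_neg h,
        extF_lt _ (show mu.length - 1 - ((j : ℕ) - lam.length) < mu.length by omega),
        if_neg (show ¬(mu.length - 1 - ((j : ℕ) - lam.length) = 0) by have := j.isLt; omega)]
      have hc : lam.length + (mu.length - 1 - (mu.length - 1 - ((j : ℕ) - lam.length)))
          = (j : ℕ) := by have := j.isLt; omega
      rw [hc, extF_lt l' j.isLt]
  · rintro ⟨l, m⟩ hx
    rw [Finset.mem_filter, Finset.mem_product] at hx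
    obtain ⟨⟨hl, hm⟩, hS⟩ := hx
    dsimp only at hS ⊢
    rw [key_den l m hS, mul_inv ((-1 : ZMod (p : ℕ)) ^ mu.sum)]
    rw [show ((-1 : ZMod (p : ℕ)) ^ mu.sum)⁻¹ = (-1) ^ mu.sum by
      rw [← inv_pow, inv_neg, inv_one]]
    rw [← mul_assoc, ← pow_add, ← two_mul, pow_mul, neg_one_sq, one_pow, one_mul]


lemma getD_rev (k : List ℕ) {t : ℕ} (ht : t < k.length) :
    k.reverse.getD t 0 = k.getD (k.length - 1 - t) 0 := by
  rw [List.getD_eq_getElem _ _ (by simpa using ht), List.getD_eq_getElem _ _ (by omega),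
    List.getElem_reverse]

lemma pointwise (p : PP) (lam0 mu0 nu : List ℕ) (la mb : ℕ) :
    (∑ l ∈ pf (lam0 ++ [la]).length (p : ℕ), ∑ m ∈ pf (mu0 ++ [mb]).length (p : ℕ),
        ∑ n ∈ pf nu.length (p : ℕ),
        if (p : ℕ) ∣ ((∑ i, l i) + (∑ j, m j)) then
          Polynomial.C ((den p (lam0 ++ [la]) l * den p (mu0 ++ [mb]) m *
              ∏ z, ((((∑ i, l i) + (∑ j, m j) + psum n z : ℕ)) : ZMod (p : ℕ)) ^ nu.get z)⁻¹) *
            Polynomial.X ^ ((∑ i, l i) + (∑ j, m j) + (∑ z, n z))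
        else 0)
    = (-1 : Polynomial (ZMod (p : ℕ))) ^ (mu0 ++ [mb]).sum *
        ∑ i ∈ Finset.Icc 1 ((lam0 ++ [la]).length + (mu0 ++ [mb]).length - 1),
          Polynomial.C (∑ l' ∈ (pf (lam0 ++ [la + mb] ++ mu0.reverse).length (p : ℕ)).filter
              (fun l' => (i - 1) * (p : ℕ) < ∑ j, l' j ∧ ∑ j, l' j < i * (p : ℕ)),
            (den p (lam0 ++ [la + mb] ++ mu0.reverse) l')⁻¹)
          * ((Polynomial.X : Polynomial (ZMod (p : ℕ))) ^ (p : ℕ)) ^ i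
          * (∑ n ∈ pf nu.length (p : ℕ), Polynomial.C ((den p nu n)⁻¹) * Polynomial.X ^ (∑ z, n z)) := by
  have hp : 0 < (p : ℕ) := p.2.pos
  have hA : (lam0 ++ [la]).length = lam0.length + 1 := by simp
  have hB : (mu0 ++ [mb]).length = mu0.length + 1 := by simp
  have hR : (lam0 ++ [la + mb] ++ mu0.reverse).length = lam0.length + 1 + mu0.length := by
    simp
    omega
  have hsingle : ∀ (xs : List ℕ) (c : ℕ), (xs ++ [c]).getD xs.length 0 = c := fun xs c => by
    rw [List.getD_append_right _ _ _ _ (le_refl _), Nat.sub_self]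
    rfl
  have hg1 : ∀ x, x < lam0.length → (lam0 ++ [la + mb] ++ mu0.reverse).getD x 0
      = (lam0 ++ [la]).getD x 0 := by
    intro x hx
    rw [List.getD_append _ _ _ _ (show x < (lam0 ++ [la + mb]).length by simp; omega),
      List.getD_append _ _ _ _ hx, List.getD_append _ _ _ _ hx]
  have hg2 : (lam0 ++ [la + mb] ++ mu0.reverse).getD lam0.length 0
      = (lam0 ++ [la]).getD lam0.length 0 + (mu0 ++ [mb]).getD mu0.length 0 := by
    rw [List.getD_append _ _ _ _ (show lam0.length < (lam0 ++ [la + mb]).length by simp)]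
    rw [hsingle, hsingle, hsingle]
  have hg3 : ∀ t, t < mu0.length → (lam0 ++ [la + mb] ++ mu0.reverse).getD
      (lam0.length + 1 + t) 0 = (mu0 ++ [mb]).getD (mu0.length - 1 - t) 0 := by
    intro t ht
    rw [List.getD_append_right _ _ _ _
      (show (lam0 ++ [la + mb]).length ≤ lam0.length + 1 + t by simp)]
    rw [show lam0.length + 1 + t - (lam0 ++ [la + mb]).length = t by simp]
    rw [getD_rev mu0 ht]
    rw [List.getD_append _ _ _ _ (show mu0.length - 1 - t < mu0.length by omega)]
  have hw : (mu0 ++ [mb]).sum = ∑ y ∈ Finset.range (mu0.length + 1),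
      (mu0 ++ [mb]).getD y 0 := by
    rw [list_sum_eq,
      show Finset.range (mu0 ++ [mb]).length = Finset.range (mu0.length + 1) by rw [hB]]
  -- Step 1 : collapse the n-sum
  have step1 : ∀ (l : Fin (lam0 ++ [la]).length → ℕ) (m : Fin (mu0 ++ [mb]).length → ℕ),
      (∑ n ∈ pf nu.length (p : ℕ),
        if (p : ℕ) ∣ ((∑ i, l i) + (∑ j, m j)) then
          Polynomial.C ((den p (lam0 ++ [la]) l * den p (mu0 ++ [mb]) m *
              ∏ z, ((((∑ i, l i) + (∑ j, m j) + psum n z : ℕ)) : ZMod (p : ℕ)) ^ nu.get z)⁻¹) *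
            Polynomial.X ^ ((∑ i, l i) + (∑ j, m j) + (∑ z, n z))
        else 0)
      = (if (p : ℕ) ∣ ((∑ i, l i) + (∑ j, m j)) then
          Polynomial.C ((den p (lam0 ++ [la]) l * den p (mu0 ++ [mb]) m)⁻¹) *
            Polynomial.X ^ ((∑ i, l i) + (∑ j, m j)) else 0) *
          (∑ n ∈ pf nu.length (p : ℕ),
            Polynomial.C ((den p nu n)⁻¹) * Polynomial.X ^ (∑ z, n z)) := by
    intro l m
    by_cases hd : (p : ℕ) ∣ ((∑ i, l i) + (∑ j, m j))
    · rw [if_pos hd]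
      have hS0 : (((∑ i, l i) + (∑ j, m j) : ℕ) : ZMod (p : ℕ)) = 0 :=
        (ZMod.natCast_eq_zero_iff _ _).mpr hd
      rw [Finset.mul_sum]
      refine Finset.sum_congr rfl fun n _ => ?_
      rw [if_pos hd]
      have hnu : (∏ z, ((((∑ i, l i) + (∑ j, m j) + psum n z : ℕ)) : ZMod (p : ℕ)) ^ nu.get z)
          = den p nu n := by
        refine Finset.prod_congr rfl fun z _ => ?_
        rw [Nat.cast_add, hS0, zero_add]
      rw [hnu, mul_inv, map_mul, pow_add]
      ring
    · simp [hd]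
  -- Step 2 : the partition over i
  have hpart : ∀ l ∈ pf (lam0 ++ [la]).length (p : ℕ), ∀ m ∈ pf (mu0 ++ [mb]).length (p : ℕ),
      (if (p : ℕ) ∣ ((∑ i, l i) + (∑ j, m j)) then
          Polynomial.C ((den p (lam0 ++ [la]) l * den p (mu0 ++ [mb]) m)⁻¹) *
            Polynomial.X ^ ((∑ i, l i) + (∑ j, m j)) else 0)
      = ∑ i ∈ Finset.Icc 1 ((lam0 ++ [la]).length + (mu0 ++ [mb]).length - 1),
          (if ((∑ i, l i) + (∑ j, m j)) = i * (p : ℕ) then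
            Polynomial.C ((den p (lam0 ++ [la]) l * den p (mu0 ++ [mb]) m)⁻¹) *
              Polynomial.X ^ ((∑ i, l i) + (∑ j, m j)) else 0) := by
    intro l hl m hm
    by_cases hd : (p : ℕ) ∣ ((∑ i, l i) + (∑ j, m j))
    · obtain ⟨c, hc⟩ := hd
      have hSpos : 0 < (∑ i, l i) :=
        Finset.sum_pos (fun x _ => (mem_pf.mp hl x).1) ⟨⟨0, by omega⟩, Finset.mem_univ _⟩
      have hlb : (∑ i, l i) ≤ (lam0 ++ [la]).length * ((p : ℕ) - 1) := by
        calc (∑ i, l i) ≤ (Finset.univ : Finset (Fin (lam0 ++ [la]).length)).card •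
              ((p : ℕ) - 1) :=
            Finset.sum_le_card_nsmul _ _ _ (fun x _ => by have := (mem_pf.mp hl x).2; omega)
          _ = (lam0 ++ [la]).length * ((p : ℕ) - 1) := by
            rw [Finset.card_univ, Fintype.card_fin, smul_eq_mul]
      have hmb2 : (∑ j, m j) ≤ (mu0 ++ [mb]).length * ((p : ℕ) - 1) := by
        calc (∑ j, m j) ≤ (Finset.univ : Finset (Fin (mu0 ++ [mb]).length)).card •
              ((p : ℕ) - 1) :=
            Finset.sum_le_card_nsmul _ _ _ (fun x _ => by have := (mem_pf.mp hm x).2; omega)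
          _ = (mu0 ++ [mb]).length * ((p : ℕ) - 1) := by
            rw [Finset.card_univ, Fintype.card_fin, smul_eq_mul]
      have hub : ((∑ i, l i) + (∑ j, m j)) ≤
          ((lam0 ++ [la]).length + (mu0 ++ [mb]).length) * ((p : ℕ) - 1) := by
        rw [add_mul]; omega
      have hub2 : ((lam0 ++ [la]).length + (mu0 ++ [mb]).length) * ((p : ℕ) - 1)
          < ((lam0 ++ [la]).length + (mu0 ++ [mb]).length) * (p : ℕ) :=
        mul_lt_mul_of_pos_left (by omega) (by omega)
      have hcub : c < (lam0 ++ [la]).length + (mu0 ++ [mb]).length := by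
        by_contra hcon
        push_neg at hcon
        have h5 : ((lam0 ++ [la]).length + (mu0 ++ [mb]).length) * (p : ℕ) ≤ c * (p : ℕ) :=
          Nat.mul_le_mul_right _ hcon
        have h6 : c * (p : ℕ) = (p : ℕ) * c := Nat.mul_comm _ _
        omega
      have hc0 : c ≠ 0 := by
        rintro rfl
        rw [Nat.mul_zero] at hc
        omega
      have hcond : ∀ i : ℕ, (((∑ i, l i) + (∑ j, m j)) = i * (p : ℕ)) ↔ (i = c) := by
        intro i
        refine ⟨fun h => Nat.eq_of_mul_eq_mul_right hp ?_, fun h => by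
          rw [h, hc]; exact Nat.mul_comm _ _⟩
        rw [← h, hc]
        exact Nat.mul_comm _ _
      rw [if_pos ⟨c, hc⟩]
      symm
      calc (∑ i ∈ Finset.Icc 1 ((lam0 ++ [la]).length + (mu0 ++ [mb]).length - 1),
          (if ((∑ i, l i) + (∑ j, m j)) = i * (p : ℕ) then
            Polynomial.C ((den p (lam0 ++ [la]) l * den p (mu0 ++ [mb]) m)⁻¹) *
              Polynomial.X ^ ((∑ i, l i) + (∑ j, m j)) else 0))
          = ∑ i ∈ Finset.Icc 1 ((lam0 ++ [la]).length + (mu0 ++ [mb]).length - 1),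
            (if i = c then Polynomial.C ((den p (lam0 ++ [la]) l * den p (mu0 ++ [mb]) m)⁻¹) *
              Polynomial.X ^ ((∑ i, l i) + (∑ j, m j)) else 0) := by
            refine Finset.sum_congr rfl fun i _ => ?_
            simp only [hcond]
        _ = if c ∈ Finset.Icc 1 ((lam0 ++ [la]).length + (mu0 ++ [mb]).length - 1) then
            Polynomial.C ((den p (lam0 ++ [la]) l * den p (mu0 ++ [mb]) m)⁻¹) *
              Polynomial.X ^ ((∑ i, l i) + (∑ j, m j)) else 0 :=
            Finset.sum_ite_eq' _ c _
        _ = Polynomial.C ((den p (lam0 ++ [la]) l * den p (mu0 ++ [mb]) m)⁻¹) *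
              Polynomial.X ^ ((∑ i, l i) + (∑ j, m j)) := if_pos (Finset.mem_Icc.mpr ⟨by omega, by omega⟩)
    · rw [if_neg hd]
      symm
      exact Finset.sum_eq_zero fun i _ => if_neg (fun h => hd ⟨i, by rw [h, Nat.mul_comm]⟩)
  -- per-i evaluation via the core lemma
  have step4 : ∀ i ∈ Finset.Icc 1 ((lam0 ++ [la]).length + (mu0 ++ [mb]).length - 1),
      (∑ l ∈ pf (lam0 ++ [la]).length (p : ℕ), ∑ m ∈ pf (mu0 ++ [mb]).length (p : ℕ),
        (if ((∑ i, l i) + (∑ j, m j)) = i * (p : ℕ) then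
          Polynomial.C ((den p (lam0 ++ [la]) l * den p (mu0 ++ [mb]) m)⁻¹) *
            Polynomial.X ^ ((∑ i, l i) + (∑ j, m j)) else 0))
      = (-1 : Polynomial (ZMod (p : ℕ))) ^ (mu0 ++ [mb]).sum *
          (Polynomial.C (∑ l' ∈ (pf (lam0 ++ [la + mb] ++ mu0.reverse).length (p : ℕ)).filter
              (fun l' => (i - 1) * (p : ℕ) < ∑ j, l' j ∧ ∑ j, l' j < i * (p : ℕ)),
            (den p (lam0 ++ [la + mb] ++ mu0.reverse) l')⁻¹) *
          ((Polynomial.X : Polynomial (ZMod (p : ℕ))) ^ (p : ℕ)) ^ i) := by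
    intro i hi
    have hi1 : 1 ≤ i := (Finset.mem_Icc.mp hi).1
    have e1 : ∀ (l : Fin (lam0 ++ [la]).length → ℕ) (m : Fin (mu0 ++ [mb]).length → ℕ),
        (if ((∑ i, l i) + (∑ j, m j)) = i * (p : ℕ) then
          Polynomial.C ((den p (lam0 ++ [la]) l * den p (mu0 ++ [mb]) m)⁻¹) *
            Polynomial.X ^ ((∑ i, l i) + (∑ j, m j)) else 0)
        = Polynomial.C (if ((∑ i, l i) + (∑ j, m j)) = i * (p : ℕ) then
            (den p (lam0 ++ [la]) l * den p (mu0 ++ [mb]) m)⁻¹ else 0) *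
          ((Polynomial.X : Polynomial (ZMod (p : ℕ))) ^ (p : ℕ)) ^ i := by
      intro l m
      by_cases h : ((∑ i, l i) + (∑ j, m j)) = i * (p : ℕ)
      · rw [if_pos h, if_pos h, h, ← pow_mul, Nat.mul_comm i (p : ℕ)]
      · rw [if_neg h, if_neg h, map_zero, zero_mul]
    calc (∑ l ∈ pf (lam0 ++ [la]).length (p : ℕ), ∑ m ∈ pf (mu0 ++ [mb]).length (p : ℕ),
        (if ((∑ i, l i) + (∑ j, m j)) = i * (p : ℕ) then
          Polynomial.C ((den p (lam0 ++ [la]) l * den p (mu0 ++ [mb]) m)⁻¹) *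
            Polynomial.X ^ ((∑ i, l i) + (∑ j, m j)) else 0))
        = Polynomial.C (∑ l ∈ pf (lam0 ++ [la]).length (p : ℕ),
            ∑ m ∈ pf (mu0 ++ [mb]).length (p : ℕ),
            (if ((∑ i, l i) + (∑ j, m j)) = i * (p : ℕ) then
              (den p (lam0 ++ [la]) l * den p (mu0 ++ [mb]) m)⁻¹ else 0)) *
          ((Polynomial.X : Polynomial (ZMod (p : ℕ))) ^ (p : ℕ)) ^ i := by
          rw [map_sum, Finset.sum_mul]
          refine Finset.sum_congr rfl fun l _ => ?_
          rw [map_sum, Finset.sum_mul]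
          exact Finset.sum_congr rfl fun m _ => e1 l m
      _ = Polynomial.C ((-1 : ZMod (p : ℕ)) ^ (mu0 ++ [mb]).sum *
            ∑ l' ∈ (pf (lam0 ++ [la + mb] ++ mu0.reverse).length (p : ℕ)).filter
              (fun l' => (i - 1) * (p : ℕ) < ∑ j, l' j ∧ ∑ j, l' j < i * (p : ℕ)),
            (den p (lam0 ++ [la + mb] ++ mu0.reverse) l')⁻¹) *
          ((Polynomial.X : Polynomial (ZMod (p : ℕ))) ^ (p : ℕ)) ^ i := by
          rw [core_abs p i hi1 lam0.length mu0.length (lam0 ++ [la]) (mu0 ++ [mb])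
            (lam0 ++ [la + mb] ++ mu0.reverse) hA hB hR hg1 hg2 hg3 hw]
      _ = (-1 : Polynomial (ZMod (p : ℕ))) ^ (mu0 ++ [mb]).sum *
          (Polynomial.C (∑ l' ∈ (pf (lam0 ++ [la + mb] ++ mu0.reverse).length (p : ℕ)).filter
              (fun l' => (i - 1) * (p : ℕ) < ∑ j, l' j ∧ ∑ j, l' j < i * (p : ℕ)),
            (den p (lam0 ++ [la + mb] ++ mu0.reverse) l')⁻¹) *
          ((Polynomial.X : Polynomial (ZMod (p : ℕ))) ^ (p : ℕ)) ^ i) := by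
          rw [map_mul, map_pow, map_neg, map_one, mul_assoc]
  -- assemble
  calc (∑ l ∈ pf (lam0 ++ [la]).length (p : ℕ), ∑ m ∈ pf (mu0 ++ [mb]).length (p : ℕ),
        ∑ n ∈ pf nu.length (p : ℕ),
        if (p : ℕ) ∣ ((∑ i, l i) + (∑ j, m j)) then
          Polynomial.C ((den p (lam0 ++ [la]) l * den p (mu0 ++ [mb]) m *
              ∏ z, ((((∑ i, l i) + (∑ j, m j) + psum n z : ℕ)) : ZMod (p : ℕ)) ^ nu.get z)⁻¹) *
            Polynomial.X ^ ((∑ i, l i) + (∑ j, m j) + (∑ z, n z))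
        else 0)
      = (∑ l ∈ pf (lam0 ++ [la]).length (p : ℕ), ∑ m ∈ pf (mu0 ++ [mb]).length (p : ℕ),
          (if (p : ℕ) ∣ ((∑ i, l i) + (∑ j, m j)) then
            Polynomial.C ((den p (lam0 ++ [la]) l * den p (mu0 ++ [mb]) m)⁻¹) *
              Polynomial.X ^ ((∑ i, l i) + (∑ j, m j)) else 0)) *
        (∑ n ∈ pf nu.length (p : ℕ),
          Polynomial.C ((den p nu n)⁻¹) * Polynomial.X ^ (∑ z, n z)) := by
        rw [Finset.sum_mul]
        refine Finset.sum_congr rfl fun l _ => ?_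
        rw [Finset.sum_mul]
        exact Finset.sum_congr rfl fun m _ => step1 l m
    _ = (∑ i ∈ Finset.Icc 1 ((lam0 ++ [la]).length + (mu0 ++ [mb]).length - 1),
          ∑ l ∈ pf (lam0 ++ [la]).length (p : ℕ), ∑ m ∈ pf (mu0 ++ [mb]).length (p : ℕ),
          (if ((∑ i, l i) + (∑ j, m j)) = i * (p : ℕ) then
            Polynomial.C ((den p (lam0 ++ [la]) l * den p (mu0 ++ [mb]) m)⁻¹) *
              Polynomial.X ^ ((∑ i, l i) + (∑ j, m j)) else 0)) *
        (∑ n ∈ pf nu.length (p : ℕ),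
          Polynomial.C ((den p nu n)⁻¹) * Polynomial.X ^ (∑ z, n z)) := by
        congr 1
        calc (∑ l ∈ pf (lam0 ++ [la]).length (p : ℕ), ∑ m ∈ pf (mu0 ++ [mb]).length (p : ℕ),
            (if (p : ℕ) ∣ ((∑ i, l i) + (∑ j, m j)) then
              Polynomial.C ((den p (lam0 ++ [la]) l * den p (mu0 ++ [mb]) m)⁻¹) *
                Polynomial.X ^ ((∑ i, l i) + (∑ j, m j)) else 0))
            = ∑ l ∈ pf (lam0 ++ [la]).length (p : ℕ), ∑ m ∈ pf (mu0 ++ [mb]).length (p : ℕ),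
              ∑ i ∈ Finset.Icc 1 ((lam0 ++ [la]).length + (mu0 ++ [mb]).length - 1),
              (if ((∑ i, l i) + (∑ j, m j)) = i * (p : ℕ) then
                Polynomial.C ((den p (lam0 ++ [la]) l * den p (mu0 ++ [mb]) m)⁻¹) *
                  Polynomial.X ^ ((∑ i, l i) + (∑ j, m j)) else 0) :=
              Finset.sum_congr rfl fun l hl => Finset.sum_congr rfl fun m hm => hpart l hl m hm
          _ = ∑ l ∈ pf (lam0 ++ [la]).length (p : ℕ),
              ∑ i ∈ Finset.Icc 1 ((lam0 ++ [la]).length + (mu0 ++ [mb]).length - 1),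
              ∑ m ∈ pf (mu0 ++ [mb]).length (p : ℕ),
              (if ((∑ i, l i) + (∑ j, m j)) = i * (p : ℕ) then
                Polynomial.C ((den p (lam0 ++ [la]) l * den p (mu0 ++ [mb]) m)⁻¹) *
                  Polynomial.X ^ ((∑ i, l i) + (∑ j, m j)) else 0) :=
              Finset.sum_congr rfl fun l _ => Finset.sum_comm
          _ = ∑ i ∈ Finset.Icc 1 ((lam0 ++ [la]).length + (mu0 ++ [mb]).length - 1),
              ∑ l ∈ pf (lam0 ++ [la]).length (p : ℕ), ∑ m ∈ pf (mu0 ++ [mb]).length (p : ℕ),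
              (if ((∑ i, l i) + (∑ j, m j)) = i * (p : ℕ) then
                Polynomial.C ((den p (lam0 ++ [la]) l * den p (mu0 ++ [mb]) m)⁻¹) *
                  Polynomial.X ^ ((∑ i, l i) + (∑ j, m j)) else 0) := Finset.sum_comm
    _ = (-1 : Polynomial (ZMod (p : ℕ))) ^ (mu0 ++ [mb]).sum *
        ∑ i ∈ Finset.Icc 1 ((lam0 ++ [la]).length + (mu0 ++ [mb]).length - 1),
          Polynomial.C (∑ l' ∈ (pf (lam0 ++ [la + mb] ++ mu0.reverse).length (p : ℕ)).filter
              (fun l' => (i - 1) * (p : ℕ) < ∑ j, l' j ∧ ∑ j, l' j < i * (p : ℕ)),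
            (den p (lam0 ++ [la + mb] ++ mu0.reverse) l')⁻¹)
          * ((Polynomial.X : Polynomial (ZMod (p : ℕ))) ^ (p : ℕ)) ^ i
          * (∑ n ∈ pf nu.length (p : ℕ),
            Polynomial.C ((den p nu n)⁻¹) * Polynomial.X ^ (∑ z, n z)) := by
        rw [Finset.sum_mul, Finset.mul_sum]
        refine Finset.sum_congr rfl fun i hi => ?_
        rw [step4 i hi]
        ring

/-- The part of li(λ, μ, ν; T) where p divides L_a + M_b equals
(−1)^{wt(μ)} (Σ_{i=1}^{a+b−1} ζ^{(i)}_𝒜(λ⋆μ)·(Tᵖ)^i)·li_ν(T).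
Here λ = lam0 ++ [la], μ = mu0 ++ [mb] and λ⋆μ = lam0 ++ [la + mb] ++ mu0.reverse. -/
theorem divisible_part_eq (lam0 mu0 nu : List ℕ) (la mb : ℕ) (hla : 0 < la) (hmb : 0 < mb)
    (hlam : ∀ i ∈ lam0, 0 < i) (hmu : ∀ i ∈ mu0, 0 < i) (hnu : ∀ i ∈ nu, 0 < i) :
    Bmk (fun p =>
      ∑ l ∈ pf (lam0 ++ [la]).length (p : ℕ), ∑ m ∈ pf (mu0 ++ [mb]).length (p : ℕ),
        ∑ n ∈ pf nu.length (p : ℕ),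
        if (p : ℕ) ∣ ((∑ i, l i) + (∑ j, m j)) then
          Polynomial.C ((den p (lam0 ++ [la]) l * den p (mu0 ++ [mb]) m *
              ∏ z, ((((∑ i, l i) + (∑ j, m j) + psum n z : ℕ)) : ZMod (p : ℕ)) ^ nu.get z)⁻¹) *
            Polynomial.X ^ ((∑ i, l i) + (∑ j, m j) + (∑ z, n z))
        else 0)
      = (-1 : B) ^ wt (mu0 ++ [mb])
          * ∑ i ∈ Finset.Icc 1 ((lam0 ++ [la]).length + (mu0 ++ [mb]).length - 1),
              AtoB (zetaAi i (lam0 ++ [la + mb] ++ mu0.reverse)) * Tp ^ i * liT nu := by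
  have hz : ∀ i : ℕ, AtoB (zetaAi i (lam0 ++ [la + mb] ++ mu0.reverse))
      = Bmk (fun p => Polynomial.C (∑ l' ∈ (pf (lam0 ++ [la + mb] ++ mu0.reverse).length (p : ℕ)).filter
          (fun l' => (i - 1) * (p : ℕ) < ∑ j, l' j ∧ ∑ j, l' j < i * (p : ℕ)),
          (den p (lam0 ++ [la + mb] ++ mu0.reverse) l')⁻¹)) := by
    intro i
    exact Ideal.Quotient.lift_mk _ _ _
  have htp : ∀ i : ℕ, Tp ^ i
      = Bmk (fun p => ((Polynomial.X : Polynomial (ZMod (p : ℕ))) ^ (p : ℕ)) ^ i) := by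
    intro i
    rw [show Tp = Bmk (fun p => (Polynomial.X : Polynomial (ZMod (p : ℕ))) ^ (p : ℕ)) from rfl,
      ← map_pow]
    rfl
  have hterm : ∀ i : ℕ, AtoB (zetaAi i (lam0 ++ [la + mb] ++ mu0.reverse)) * Tp ^ i * liT nu
      = Bmk (fun p => Polynomial.C (∑ l' ∈ (pf (lam0 ++ [la + mb] ++ mu0.reverse).length (p : ℕ)).filter
          (fun l' => (i - 1) * (p : ℕ) < ∑ j, l' j ∧ ∑ j, l' j < i * (p : ℕ)),
          (den p (lam0 ++ [la + mb] ++ mu0.reverse) l')⁻¹)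
          * ((Polynomial.X : Polynomial (ZMod (p : ℕ))) ^ (p : ℕ)) ^ i
          * (∑ n ∈ pf nu.length (p : ℕ), Polynomial.C ((den p nu n)⁻¹) * Polynomial.X ^ (∑ z, n z))) := by
    intro i
    rw [hz i, htp i, show liT nu = Bmk (fun p => (∑ n ∈ pf nu.length (p : ℕ), Polynomial.C ((den p nu n)⁻¹) * Polynomial.X ^ (∑ z, n z))) from rfl, ← map_mul, ← map_mul]
    rfl
  have hneg : (-1 : B) = Bmk (-1) := by rw [map_neg, map_one]
  have hrhs : (-1 : B) ^ wt (mu0 ++ [mb])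
      * ∑ i ∈ Finset.Icc 1 ((lam0 ++ [la]).length + (mu0 ++ [mb]).length - 1),
          AtoB (zetaAi i (lam0 ++ [la + mb] ++ mu0.reverse)) * Tp ^ i * liT nu
      = Bmk (fun p => (-1 : Polynomial (ZMod (p : ℕ))) ^ (mu0 ++ [mb]).sum *
          ∑ i ∈ Finset.Icc 1 ((lam0 ++ [la]).length + (mu0 ++ [mb]).length - 1),
            Polynomial.C (∑ l' ∈ (pf (lam0 ++ [la + mb] ++ mu0.reverse).length (p : ℕ)).filter
          (fun l' => (i - 1) * (p : ℕ) < ∑ j, l' j ∧ ∑ j, l' j < i * (p : ℕ)),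
          (den p (lam0 ++ [la + mb] ++ mu0.reverse) l')⁻¹)
            * ((Polynomial.X : Polynomial (ZMod (p : ℕ))) ^ (p : ℕ)) ^ i
            * (∑ n ∈ pf nu.length (p : ℕ), Polynomial.C ((den p nu n)⁻¹) * Polynomial.X ^ (∑ z, n z))) := by
    rw [Finset.sum_congr rfl (fun i _ => hterm i), ← map_sum, hneg, ← map_pow, ← map_mul]
    refine congrArg Bmk (funext fun p => ?_)
    simp only [Pi.mul_apply, Pi.pow_apply, Pi.neg_apply, Pi.one_apply, Finset.sum_apply, wt]
  rw [hrhs]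
  exact congrArg Bmk (funext fun p => pointwise p lam0 mu0 nu la mb)


end FMP
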